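/- For z, w ∈ ℂ with |arg z| ≤ π/2 − κ/2 and |w| ≤ δ sin(κ/2)·|z| where 0 < δ < 1 and 0 < κ < π, there exists ε with 0 < ε ≤ κ/2 and sin(κ/2 − ε) ≤ δ sin(κ/2) such that |arg(z + w)| ≤ π/2 − ε. -/

import Mathlib

set_option maxHeartbeats 800000

/-- For `z, w ∈ ℂ` with `|arg z| ≤ π/2 − κ/2` and
`|w| ≤ δ sin(κ/2) |z|` where `0 < δ < 1` and `0 < κ < π`, there exists `ε` with
`0 < ε ≤ κ/2` and `sin(κ/2 − ε) ≤ δ sin(κ/2)` such that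
`|arg (z + w)| ≤ π/2 − ε`. -/
theorem arg_add_perturbation_in_subsector
    (δ κ : ℝ) (hδ : 0 < δ) (hδ1 : δ < 1) (hκ : 0 < κ) (hκπ : κ < Real.pi)
    (z w : ℂ)
    (hz : |z.arg| ≤ Real.pi / 2 - κ / 2)
    (hw : ‖w‖ ≤ δ * Real.sin (κ / 2) * ‖z‖) :
    ∃ ε : ℝ, 0 < ε ∧ ε ≤ κ / 2 ∧ Real.sin (κ / 2 - ε) ≤ δ * Real.sin (κ / 2) ∧
      |(z + w).arg| ≤ Real.pi / 2 - ε := by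
  have hπ := Real.pi_pos
  set s := Real.sin (κ / 2) with hsdef
  have hκ2 : κ / 2 < Real.pi / 2 := by linarith
  have hs : 0 < s := Real.sin_pos_of_pos_of_lt_pi (by linarith) (by linarith)
  have hs1 : s ≤ 1 := Real.sin_le_one _
  have hδs1 : δ * s < 1 := by nlinarith
  have hδs0 : 0 ≤ δ * s := by positivity
  set β := Real.arcsin (δ * s) with hβdef
  have hβ0 : 0 ≤ β := Real.arcsin_nonneg.2 hδs0
  have hsinβ : Real.sin β = δ * s := Real.sin_arcsin (by linarith) hδs1.le
  have hβlt : β < κ / 2 := by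
    have h1 : Real.arcsin (δ * s) < Real.arcsin s :=
      Real.strictMonoOn_arcsin ⟨by linarith, hδs1.le⟩ ⟨by linarith, hs1⟩ (by nlinarith)
    have h2 : Real.arcsin s = κ / 2 := Real.arcsin_sin (by linarith) hκ2.le
    rw [h2] at h1; exact h1
  have hβhalf : β ≤ Real.pi / 2 := by linarith
  refine ⟨κ / 2 - β, by linarith, by linarith, by rw [show κ/2 - (κ/2 - β) = β by ring, hsinβ], ?_⟩
  rcases eq_or_ne z 0 with rfl | hz0
  · have hw0 : w = 0 := by
      simpa using norm_le_zero_iff.1 (by simpa using hw)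
    simp [hw0, Complex.arg_zero]
    linarith
  · set u := z + w with hudef
    set a := ‖z‖ with hadef
    have ha : 0 < a := norm_pos_iff.mpr hz0
    have hwa : ‖w‖ ≤ δ * s * a := hw
    -- Re z ≥ s * a
    have hrez : s * a ≤ z.re := by
      have hc : Real.cos (z.arg) = z.re / a := Complex.cos_arg hz0
      have hargz : |z.arg| ≤ Real.pi := (Complex.abs_arg_le_pi z)
      have h1 : Real.cos (Real.pi / 2 - κ / 2) ≤ Real.cos |z.arg| :=
        Real.cos_le_cos_of_nonneg_of_le_pi (abs_nonneg _) (by linarith) hz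
      rw [Real.cos_abs, hc, Real.cos_pi_div_two_sub] at h1
      calc s * a = s * a := rfl
        _ ≤ (z.re / a) * a := by
            apply mul_le_mul_of_nonneg_right h1 ha.le
        _ = z.re := by field_simp
    have hwre : -(δ * s * a) ≤ w.re := by
      have := abs_le.1 (le_trans (Complex.abs_re_le_norm w) hwa)
      -- wrong; need |w.re| ≤ ‖w‖
      linarith [(abs_le.1 (le_trans (Complex.abs_re_le_norm w) hwa)).1]
    have hreu : 0 < u.re := by
      have : u.re = z.re + w.re := by simp [hudef]
      rw [this]
      nlinarith [mul_pos (mul_pos hs ha) (sub_pos.2 hδ1)]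
    have hu0 : u ≠ 0 := fun h => by simp [h] at hreu
    set b := ‖u‖ with hbdef
    have hb : 0 < b := norm_pos_iff.mpr hu0
    have hargu : |u.arg| < Real.pi / 2 := Complex.abs_arg_lt_pi_div_two_iff.2 (Or.inl hreu)
    -- d = arg u - arg z
    set d := u.arg - z.arg with hddef
    have hcosu : Real.cos u.arg = u.re / b := Complex.cos_arg hu0
    have hsinu : Real.sin u.arg = u.im / b := Complex.sin_arg u
    have hcosz : Real.cos z.arg = z.re / a := Complex.cos_arg hz0
    have hsinz : Real.sin z.arg = z.im / a := Complex.sin_arg z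
    have hcosd : Real.cos d = (u.re * z.re + u.im * z.im) / (b * a) := by
      rw [hddef, Real.cos_sub, hcosu, hsinu, hcosz, hsinz]; field_simp
    have hsind : Real.sin d = (u.im * z.re - u.re * z.im) / (b * a) := by
      rw [hddef, Real.sin_sub, hcosu, hsinu, hcosz, hsinz]; field_simp
    -- positivity of dot product
    have hdot : 0 < u.re * z.re + u.im * z.im := by
      have h1 : u.re * z.re + u.im * z.im = a^2 + (w.re * z.re + w.im * z.im) := by
        have : u.re = z.re + w.re := by simp [hudef]
        have h2 : u.im = z.im + w.im := by simp [hudef]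
        rw [this, h2]
        have : a^2 = z.re^2 + z.im^2 := by
          rw [hadef, Complex.sq_norm, Complex.normSq_apply]; ring
        rw [this]; ring
      have h3 : |w.re * z.re + w.im * z.im| ≤ ‖w‖ * a := by
        have := Complex.abs_re_le_norm (w * (starRingEnd ℂ) z)
        simpa [Complex.mul_re, Complex.conj_re, Complex.conj_im, map_mul, Complex.norm_conj,
          mul_comm, abs_mul] using this
      have h4 := (abs_le.1 h3).1
      have h5 : ‖w‖ * a ≤ δ * s * a * a := mul_le_mul_of_nonneg_right hwa ha.le
      have h6 : δ * s * (a * a) < 1 * (a * a) := mul_lt_mul_of_pos_right hδs1 (mul_pos ha ha)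
      have ha2 : a ^ 2 = a * a := sq a
      rw [h1]
      linarith
    have hcosdpos : 0 < Real.cos d := by
      rw [hcosd]; positivity
    -- cross product bound
    have hcross : |u.im * z.re - u.re * z.im| ≤ b * ‖w‖ := by
      have hz' : z = u - w := by rw [hudef]; ring
      have h1 : u.im * z.re - u.re * z.im = u.re * w.im - u.im * w.re := by
        rw [hz']; simp [Complex.sub_re, Complex.sub_im]; ring
      rw [h1]
      have := Complex.abs_im_le_norm ((starRingEnd ℂ) u * w)
      simpa [Complex.mul_im, Complex.conj_re, Complex.conj_im, map_mul, Complex.norm_conj, sub_eq_add_neg] using this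
    have hsindabs : |Real.sin d| ≤ δ * s := by
      rw [hsind, abs_div]
      rw [div_le_iff₀ (by positivity : (0:ℝ) < |b * a|)]
      have : |b * a| = b * a := abs_of_pos (by positivity)
      rw [this]
      calc |u.im * z.re - u.re * z.im| ≤ b * ‖w‖ := hcross
        _ ≤ b * (δ * s * a) := by nlinarith
        _ = δ * s * (b * a) := by ring
    -- |d| < π/2
    have hdlt : |d| < Real.pi / 2 := by
      by_contra h
      push_neg at h
      have hdle : |d| ≤ Real.pi := by
        have := abs_le.1 (le_of_lt hargu)
        have hz2 := abs_le.1 hz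
        rw [hddef]
        rw [abs_le]
        constructor <;> nlinarith
      have : Real.cos |d| ≤ Real.cos (Real.pi / 2) :=
        Real.cos_le_cos_of_nonneg_of_le_pi (by linarith) hdle h
      rw [Real.cos_pi_div_two, Real.cos_abs] at this
      linarith
    -- |d| ≤ β
    have hdβ : |d| ≤ β := by
      by_contra h
      push_neg at h
      have : Real.sin β < Real.sin |d| :=
        Real.strictMonoOn_sin ⟨by linarith, hβhalf⟩ ⟨by linarith [abs_nonneg d], hdlt.le⟩ h
      rw [hsinβ] at this
      have hsd : Real.sin |d| ≤ |Real.sin d| := by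
        rcases abs_cases d with ⟨h1, _⟩ | ⟨h1, _⟩ <;> rw [h1]
        · exact le_abs_self _
        · rw [Real.sin_neg]; exact neg_le_abs _
      linarith
    -- conclude
    have : |u.arg| ≤ |z.arg| + |d| := by
      have : u.arg = z.arg + d := by rw [hddef]; ring
      rw [this]; exact abs_add_le _ _
    have : |u.arg| ≤ (Real.pi / 2 - κ / 2) + β := by linarith
    linarith
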